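/- The set E⁽²⁾ = { (x,y) ↦ (x + P(y), y) : P ∈ ℂ[y] } is a maximal abelian subgroup of E: E⁽²⁾ is an abelian subgroup of E, and every abelian subgroup K of E containing E⁽²⁾ is equal to E⁽²⁾. -/

import Mathlib

noncomputable section

open MvPolynomial

/-- A self-map of ℂ² is polynomial if both components are given by polynomials in the
two coordinates. -/
def IsPolyMap (f : ℂ × ℂ → ℂ × ℂ) : Prop :=
  ∃ p q : MvPolynomial (Fin 2) ℂ, ∀ v : ℂ × ℂ,
    f v = (MvPolynomial.eval ![v.1, v.2] p, MvPolynomial.eval ![v.1, v.2] q)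

theorem IsPolyMap.comp {f g : ℂ × ℂ → ℂ × ℂ} (hf : IsPolyMap f) (hg : IsPolyMap g) :
    IsPolyMap (f ∘ g) := by
  obtain ⟨p, q, hpq⟩ := hf
  obtain ⟨p', q', hpq'⟩ := hg
  refine ⟨bind₁ ![p', q'] p, bind₁ ![p', q'] q, fun v => ?_⟩
  have key : ∀ r : MvPolynomial (Fin 2) ℂ,
      MvPolynomial.eval ![v.1, v.2] (bind₁ ![p', q'] r) =
        MvPolynomial.eval
          ![MvPolynomial.eval ![v.1, v.2] p', MvPolynomial.eval ![v.1, v.2] q'] r := by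
    intro r
    have h := MvPolynomial.aeval_bind₁ (S := ℂ) ![v.1, v.2] ![p', q'] r
    have h2 : (fun i => MvPolynomial.aeval ![v.1, v.2] (![p', q'] i)) =
        ![MvPolynomial.eval ![v.1, v.2] p', MvPolynomial.eval ![v.1, v.2] q'] := by
      funext i
      fin_cases i <;> rfl
    rw [h2] at h
    exact h
  calc (f ∘ g) v
      = f (MvPolynomial.eval ![v.1, v.2] p', MvPolynomial.eval ![v.1, v.2] q') := by
        rw [Function.comp_apply, hpq' v]
    _ = (MvPolynomial.eval ![MvPolynomial.eval ![v.1, v.2] p',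
          MvPolynomial.eval ![v.1, v.2] q'] p,
         MvPolynomial.eval ![MvPolynomial.eval ![v.1, v.2] p',
          MvPolynomial.eval ![v.1, v.2] q'] q) := hpq _
    _ = _ := by rw [key p, key q]

/-- The group Aut(ℂ²) of polynomial automorphisms of ℂ², as a subgroup of the
permutation group of ℂ²: the bijections of ℂ² which are polynomial and whose inverse is
polynomial. -/
def AutC2 : Subgroup (Equiv.Perm (ℂ × ℂ)) where
  carrier := { f : Equiv.Perm (ℂ × ℂ) | IsPolyMap f ∧ IsPolyMap f.symm }
  one_mem' := by
    constructor <;>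
      exact ⟨MvPolynomial.X 0, MvPolynomial.X 1, fun v => by simp <;> rfl⟩
  mul_mem' := by
    rintro f g ⟨hf1, hf2⟩ ⟨hg1, hg2⟩
    constructor
    · have h := hf1.comp hg1
      have e : ⇑(f * g) = ⇑f ∘ ⇑g := rfl
      rwa [e]
    · have h := hg2.comp hf2
      have e : ⇑(f * g).symm = ⇑g.symm ∘ ⇑f.symm := rfl
      rwa [e]
  inv_mem' := by
    rintro f ⟨h1, h2⟩
    exact ⟨h2, h1⟩

/-- The elementary subgroup E of Aut(ℂ²): maps (x,y) ↦ (αx + P(y), βy + γ). -/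
def ElemGrp : Subgroup ↥AutC2 where
  carrier := { f | ∃ (α β γ : ℂ) (P : Polynomial ℂ), α ≠ 0 ∧ β ≠ 0 ∧
    ∀ v : ℂ × ℂ, (f : Equiv.Perm (ℂ × ℂ)) v = (α * v.1 + P.eval v.2, β * v.2 + γ) }
  one_mem' := ⟨1, 1, 0, 0, one_ne_zero, one_ne_zero, fun v => by simp⟩
  mul_mem' := by
    rintro f g ⟨α, β, γ, P, hα, hβ, hf⟩ ⟨α', β', γ', P', hα', hβ', hg⟩
    refine ⟨α * α', β * β', β * γ' + γ,
      Polynomial.C α * P' + P.comp (Polynomial.C β' * Polynomial.X + Polynomial.C γ'),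
      mul_ne_zero hα hα', mul_ne_zero hβ hβ', fun v => ?_⟩
    have e : ((f * g : ↥AutC2) : Equiv.Perm (ℂ × ℂ)) v
        = (f : Equiv.Perm (ℂ × ℂ)) ((g : Equiv.Perm (ℂ × ℂ)) v) := rfl
    rw [e, hg v, hf]
    simp only [Polynomial.eval_add, Polynomial.eval_mul, Polynomial.eval_comp,
      Polynomial.eval_C, Polynomial.eval_X, Prod.mk.injEq]
    constructor <;> ring
  inv_mem' := by
    rintro f ⟨α, β, γ, P, hα, hβ, hf⟩
    refine ⟨α⁻¹, β⁻¹, -(β⁻¹ * γ),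
      Polynomial.C (-α⁻¹) * P.comp (Polynomial.C β⁻¹ * Polynomial.X + Polynomial.C (-(β⁻¹ * γ))),
      inv_ne_zero hα, inv_ne_zero hβ, fun v => ?_⟩
    have e : ((f⁻¹ : ↥AutC2) : Equiv.Perm (ℂ × ℂ)) v
        = ((f : Equiv.Perm (ℂ × ℂ))).symm v := rfl
    rw [e, Equiv.symm_apply_eq, hf, Prod.ext_iff]
    simp only [Polynomial.eval_add, Polynomial.eval_mul, Polynomial.eval_comp,
      Polynomial.eval_C, Polynomial.eval_X]
    constructor
    · field_simp; ring
    · field_simp; ring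

/-- The subgroup E⁽²⁾ of Aut(ℂ²): maps (x,y) ↦ (x + P(y), y). -/
def E2Grp : Subgroup ↥AutC2 where
  carrier := { f | ∃ P : Polynomial ℂ, ∀ v : ℂ × ℂ,
    (f : Equiv.Perm (ℂ × ℂ)) v = (v.1 + P.eval v.2, v.2) }
  one_mem' := ⟨0, fun v => by simp⟩
  mul_mem' := by
    rintro f g ⟨P, hf⟩ ⟨P', hg⟩
    refine ⟨P' + P, fun v => ?_⟩
    have e : ((f * g : ↥AutC2) : Equiv.Perm (ℂ × ℂ)) v
        = (f : Equiv.Perm (ℂ × ℂ)) ((g : Equiv.Perm (ℂ × ℂ)) v) := rfl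
    rw [e, hg v, hf]
    simp only [Polynomial.eval_add, Prod.mk.injEq]
    constructor <;> first | ring | trivial
  inv_mem' := by
    rintro f ⟨P, hf⟩
    refine ⟨-P, fun v => ?_⟩
    have e : ((f⁻¹ : ↥AutC2) : Equiv.Perm (ℂ × ℂ)) v
        = ((f : Equiv.Perm (ℂ × ℂ))).symm v := rfl
    rw [e, Equiv.symm_apply_eq, hf, Prod.ext_iff]
    simp

/-- The translation automorphism (x,y) ↦ (x + Q(y), y) as a permutation. -/
def transEquiv (Q : Polynomial ℂ) : Equiv.Perm (ℂ × ℂ) where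
  toFun v := (v.1 + Q.eval v.2, v.2)
  invFun v := (v.1 - Q.eval v.2, v.2)
  left_inv v := by simp
  right_inv v := by simp

lemma eval_aux (Q : Polynomial ℂ) (v : ℂ × ℂ) :
    MvPolynomial.eval ![v.1, v.2] (Polynomial.aeval (MvPolynomial.X 1) Q) = Q.eval v.2 := by
  induction Q using Polynomial.induction_on' with
  | add p q hp hq => simp [hp, hq]
  | monomial n a => simp [Polynomial.aeval_monomial, Polynomial.eval_monomial]

lemma transMem (Q : Polynomial ℂ) : transEquiv Q ∈ AutC2 := by
  constructor
  · refine ⟨MvPolynomial.X 0 + Polynomial.aeval (MvPolynomial.X 1) Q, MvPolynomial.X 1,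
      fun v => ?_⟩
    simp [transEquiv, eval_aux]
  · refine ⟨MvPolynomial.X 0 - Polynomial.aeval (MvPolynomial.X 1) Q, MvPolynomial.X 1,
      fun v => ?_⟩
    simp [transEquiv, eval_aux]

def tE (Q : Polynomial ℂ) : ↥AutC2 := ⟨transEquiv Q, transMem Q⟩

lemma tE_mem_E2 (Q : Polynomial ℂ) : tE Q ∈ E2Grp := ⟨Q, fun _ => rfl⟩

/-- The group `E⁽²⁾ = {(x,y) ↦ (x + P(y), y)}` is a maximal abelian subgroup of the
elementary group `E`:  `E⁽²⁾` is an abelian subgroup of `E`, and any abelian subgroup of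
`E` containing `E⁽²⁾` equals `E⁽²⁾`. -/
theorem e2_maximal_abelian_in_elem :
    E2Grp ≤ ElemGrp ∧
    (∀ a ∈ E2Grp, ∀ b ∈ E2Grp, a * b = b * a) ∧
    (∀ K : Subgroup ↥AutC2, K ≤ ElemGrp → (∀ a ∈ K, ∀ b ∈ K, a * b = b * a) →
      E2Grp ≤ K → K = E2Grp) := by
  refine ⟨?_, ?_, ?_⟩
  · rintro f ⟨P, hf⟩
    exact ⟨1, 1, 0, P, one_ne_zero, one_ne_zero, fun v => by rw [hf v]; simp⟩
  · rintro a ⟨P, ha⟩ b ⟨P', hb⟩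
    refine Subtype.ext (Equiv.ext fun v => ?_)
    have e1 : ((a * b : ↥AutC2) : Equiv.Perm (ℂ × ℂ)) v
        = (a : Equiv.Perm (ℂ × ℂ)) ((b : Equiv.Perm (ℂ × ℂ)) v) := rfl
    have e2 : ((b * a : ↥AutC2) : Equiv.Perm (ℂ × ℂ)) v
        = (b : Equiv.Perm (ℂ × ℂ)) ((a : Equiv.Perm (ℂ × ℂ)) v) := rfl
    show ((a * b : ↥AutC2) : Equiv.Perm (ℂ × ℂ)) v = ((b * a : ↥AutC2) : Equiv.Perm (ℂ × ℂ)) v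
    rw [e1, e2, ha v, hb v, ha, hb]
    simp only [Prod.mk.injEq]
    constructor <;> first | ring | trivial
  · intro K hKE hKab hE2K
    refine le_antisymm ?_ hE2K
    intro f hf
    obtain ⟨α, β, γ, P, hα, hβ, hfe⟩ := hKE hf
    have key : ∀ Q : Polynomial ℂ, ∀ v : ℂ × ℂ,
        (α * (v.1 + Q.eval v.2) + P.eval v.2, β * v.2 + γ)
          = (α * v.1 + P.eval v.2 + Q.eval (β * v.2 + γ), β * v.2 + γ) := by
      intro Q v
      have hc := hKab f hf (tE Q) (hE2K (tE_mem_E2 Q))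
      have hv : ((f * tE Q : ↥AutC2) : Equiv.Perm (ℂ × ℂ)) v
          = ((tE Q * f : ↥AutC2) : Equiv.Perm (ℂ × ℂ)) v := by rw [hc]
      have e1 : ((f * tE Q : ↥AutC2) : Equiv.Perm (ℂ × ℂ)) v
          = (f : Equiv.Perm (ℂ × ℂ)) (((tE Q : ↥AutC2) : Equiv.Perm (ℂ × ℂ)) v) := rfl
      have e2 : ((tE Q * f : ↥AutC2) : Equiv.Perm (ℂ × ℂ)) v
          = ((tE Q : ↥AutC2) : Equiv.Perm (ℂ × ℂ)) ((f : Equiv.Perm (ℂ × ℂ)) v) := rfl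
      rw [e1, e2] at hv
      have htq : ∀ w : ℂ × ℂ, ((tE Q : ↥AutC2) : Equiv.Perm (ℂ × ℂ)) w
          = (w.1 + Q.eval w.2, w.2) := fun w => rfl
      rw [htq, hfe, hfe, htq] at hv
      simpa using hv
    have hα1 : α = 1 := by
      have h := key 1 0
      simp only [Polynomial.eval_one, Prod.mk.injEq] at h
      have := h.1
      linear_combination this
    have hγ0 : γ = 0 := by
      have h := key Polynomial.X (0, 0)
      simp only [Polynomial.eval_X, hα1, Prod.mk.injEq] at h
      have := h.1
      linear_combination -this
    have hβ1 : β = 1 := by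
      have h := key Polynomial.X (0, 1)
      simp only [Polynomial.eval_X, hα1, hγ0, Prod.mk.injEq] at h
      have := h.1
      linear_combination -this
    refine ⟨P, fun v => ?_⟩
    rw [hfe v, hα1, hβ1, hγ0]
    simp
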